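/- Let u ∈ ℝᵖ, S ⊆ {1,…,m}, λ₁,…,λ_m > 0, and ℓ ≥ 1. Define λ₋² = min{ Σ_{j ∈ S'} λ_j² : S' ⊆ {1,…,m}, |G_{S'}| ≥ ℓ }. Let S₀ ⊆ {1,…,m} \ S consist of indices j with the largest values of ‖u_{G_j}‖₂/λ_j among j ∉ S, chosen so that ℓ ≤ |G_{S₀}| < ℓ + k₀. Then √( Σ_{j ∉ S ∪ S₀} ‖u_{G_j}‖₂² ) ≤ (2λ₋)^{−1} Σ_{j ∉ S} λ_j ‖u_{G_j}‖₂. -/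

import Mathlib

open Matrix MeasureTheory ProbabilityTheory

noncomputable def norm2 {ι : Type*} [Fintype ι] (v : ι → ℝ) : ℝ :=
  Real.sqrt (∑ i, v i ^ 2)

open scoped Classical in
noncomputable def invSqrt {ι : Type*} [Fintype ι] [DecidableEq ι] (M : Matrix ι ι ℝ) :
    Matrix ι ι ℝ :=
  if h : M.PosSemidef then
    ((h.1.eigenvectorUnitary : Matrix ι ι ℝ) * diagonal (RCLike.ofReal ∘ Real.sqrt ∘ h.1.eigenvalues) *
      (star h.1.eigenvectorUnitary : Matrix ι ι ℝ))⁻¹ else 0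

def colSub {n p : ℕ} (X : Matrix (Fin n) (Fin p) ℝ) (F : Finset (Fin p)) :
    Matrix (Fin n) {i : Fin p // i ∈ F} ℝ :=
  Matrix.of fun r c => X r c.1

noncomputable def groupProj {n p : ℕ} (X : Matrix (Fin n) (Fin p) ℝ) (F : Finset (Fin p))
    (v : Fin n → ℝ) : ℝ :=
  norm2 ((invSqrt ((colSub X F)ᵀ * colSub X F)) *ᵥ ((colSub X F)ᵀ *ᵥ v))

def restr {p : ℕ} (F : Finset (Fin p)) (β : Fin p → ℝ) : Fin p → ℝ :=
  fun i => if i ∈ F then β i else 0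

/-- `G` is a partition of the index set into disjoint groups. -/
def IsPartition {p m : ℕ} (G : Fin m → Finset (Fin p)) : Prop :=
  (∀ j₁ j₂, j₁ ≠ j₂ → Disjoint (G j₁) (G j₂)) ∧ Finset.univ.biUnion G = Finset.univ

/-- `β` is `(g, k)` strongly group-sparse. -/
def SGS {p m : ℕ} (G : Fin m → Finset (Fin p)) (g k : ℕ) (β : Fin p → ℝ) : Prop :=
  ∃ S : Finset (Fin m), S.card ≤ g ∧ (S.biUnion G).card ≤ k ∧
    ∀ i, β i ≠ 0 → i ∈ S.biUnion G

noncomputable def rhoMinusF {n p : ℕ} (X : Matrix (Fin n) (Fin p) ℝ) (F : Finset (Fin p)) : ℝ :=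
  sInf {r : ℝ | ∃ β : Fin p → ℝ, β ≠ 0 ∧ (∀ i ∉ F, β i = 0) ∧
    r = norm2 (X *ᵥ β) ^ 2 / (n * norm2 β ^ 2)}

noncomputable def rhoPlusF {n p : ℕ} (X : Matrix (Fin n) (Fin p) ℝ) (F : Finset (Fin p)) : ℝ :=
  sSup {r : ℝ | ∃ β : Fin p → ℝ, β ≠ 0 ∧ (∀ i ∉ F, β i = 0) ∧
    r = norm2 (X *ᵥ β) ^ 2 / (n * norm2 β ^ 2)}

noncomputable def rhoMinusN {n p m : ℕ} (X : Matrix (Fin n) (Fin p) ℝ)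
    (G : Fin m → Finset (Fin p)) (s : ℕ) : ℝ :=
  sInf {r : ℝ | ∃ S : Finset (Fin m), (S.biUnion G).card ≤ s ∧ r = rhoMinusF X (S.biUnion G)}

noncomputable def rhoPlusN {n p m : ℕ} (X : Matrix (Fin n) (Fin p) ℝ)
    (G : Fin m → Finset (Fin p)) (s : ℕ) : ℝ :=
  sSup {r : ℝ | ∃ S : Finset (Fin m), (S.biUnion G).card ≤ s ∧ r = rhoPlusF X (S.biUnion G)}

/-- The group Lasso objective. -/
noncomputable def glObj {n p m : ℕ} (X : Matrix (Fin n) (Fin p) ℝ)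
    (G : Fin m → Finset (Fin p)) (lam : Fin m → ℝ) (y : Fin n → ℝ) (β : Fin p → ℝ) : ℝ :=
  (1 / (n : ℝ)) * norm2 (X *ᵥ β - y) ^ 2 + ∑ j, lam j * norm2 (restr (G j) β)

/-- first inequality of Lemma 9: with `λ₋² = min{Σ_{j∈S'} λ_j² : |G_{S'}| ≥ ℓ}`
and `S₀` the groups outside `S` with the largest values of `‖u_{G_j}‖₂/λ_j`, with
`ℓ ≤ |G_{S₀}| < ℓ + k₀`, we have
`√(Σ_{j ∉ S ∪ S₀} ‖u_{G_j}‖₂²) ≤ (2λ₋)⁻¹ Σ_{j ∉ S} λ_j ‖u_{G_j}‖₂`. -/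
theorem stmt_11 (p m : ℕ) (G : Fin m → Finset (Fin p)) (hG : IsPartition G)
    (k0 : ℕ) (hk0 : k0 = Finset.univ.sup fun j => (G j).card)
    (u : Fin p → ℝ) (S : Finset (Fin m)) (lam : Fin m → ℝ) (hlam : ∀ j, 0 < lam j)
    (ℓ : ℕ) (hℓ : 1 ≤ ℓ)
    (lamMinus : ℝ)
    (hlamMinus : lamMinus = Real.sqrt (sInf {r : ℝ | ∃ S' : Finset (Fin m),
      ℓ ≤ (S'.biUnion G).card ∧ r = ∑ j ∈ S', lam j ^ 2}))
    (S0 : Finset (Fin m)) (hS0S : Disjoint S0 S)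
    (hS0top : ∀ j ∈ S0, ∀ j', j' ∉ S → j' ∉ S0 →
      norm2 (restr (G j') u) / lam j' ≤ norm2 (restr (G j) u) / lam j)
    (hcard1 : ℓ ≤ (S0.biUnion G).card) (hcard2 : (S0.biUnion G).card < ℓ + k0) :
    Real.sqrt (∑ j ∈ Finset.univ \ (S ∪ S0), norm2 (restr (G j) u) ^ 2) ≤
      (2 * lamMinus)⁻¹ * ∑ j ∈ Finset.univ \ S, lam j * norm2 (restr (G j) u) := by
  classical
  set a : Fin m → ℝ := fun j => norm2 (restr (G j) u) with ha
  have ha0 : ∀ j, 0 ≤ a j := fun j => Real.sqrt_nonneg _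
  -- S0 is nonempty
  have hS0ne : S0.Nonempty := by
    rcases Finset.eq_empty_or_nonempty S0 with h | h
    · subst h; simp at hcard1; omega
    · exact h
  obtain ⟨j0, hj0S0, hj0min⟩ := S0.exists_min_image (fun j => a j / lam j) hS0ne
  set t : ℝ := a j0 / lam j0 with htdef
  have ht0 : 0 ≤ t := div_nonneg (ha0 _) (hlam j0).le
  set Sset : Set ℝ := {r : ℝ | ∃ S' : Finset (Fin m),
      ℓ ≤ (S'.biUnion G).card ∧ r = ∑ j ∈ S', lam j ^ 2} with hSset
  have hne : Sset.Nonempty := ⟨_, S0, hcard1, rfl⟩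
  -- positive lower bound
  set c : ℝ := Finset.univ.inf' ⟨j0, Finset.mem_univ j0⟩ (fun j => lam j ^ 2) with hc
  have hcpos : 0 < c := by
    rw [hc]
    apply Finset.lt_inf'_iff _ |>.mpr
    intro j _
    exact pow_pos (hlam j) 2
  have hlb : ∀ r ∈ Sset, c ≤ r := by
    rintro r ⟨S', hS'card, rfl⟩
    have hS'ne : S'.Nonempty := by
      rcases Finset.eq_empty_or_nonempty S' with h | h
      · subst h; simp at hS'card; omega
      · exact h
    obtain ⟨j, hj⟩ := hS'ne
    calc c ≤ lam j ^ 2 := Finset.inf'_le _ (Finset.mem_univ j)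
      _ ≤ ∑ j ∈ S', lam j ^ 2 :=
          Finset.single_le_sum (f := fun j => lam j ^ 2) (fun i _ => sq_nonneg _) hj
  have hInfpos : 0 < sInf Sset := lt_of_lt_of_le hcpos (le_csInf hne hlb)
  have hlamsq : lamMinus ^ 2 = sInf Sset := by
    rw [hlamMinus, Real.sq_sqrt hInfpos.le]
  have hlamPos : 0 < lamMinus := by
    rw [hlamMinus]; exact Real.sqrt_pos.mpr hInfpos
  have hInf_le : sInf Sset ≤ ∑ j ∈ S0, lam j ^ 2 :=
    csInf_le ⟨c, hlb⟩ ⟨S0, hcard1, rfl⟩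
  -- Step 2 : lamMinus^2 * t ≤ A
  set A : ℝ := ∑ j ∈ S0, lam j * a j with hA
  set B : ℝ := ∑ j ∈ Finset.univ \ (S ∪ S0), lam j * a j with hB
  have hstep2 : lamMinus ^ 2 * t ≤ A := by
    have h1 : (∑ j ∈ S0, lam j ^ 2) * t ≤ A := by
      rw [Finset.sum_mul]
      apply Finset.sum_le_sum
      intro j hj
      have := hj0min j hj
      have hlj := hlam j
      have : lam j * t ≤ a j := by
        rw [htdef]
        calc lam j * (a j0 / lam j0) ≤ lam j * (a j / lam j) :=
              mul_le_mul_of_nonneg_left this hlj.le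
          _ = a j := by field_simp
      nlinarith [hlj]
    calc lamMinus ^ 2 * t ≤ (∑ j ∈ S0, lam j ^ 2) * t := by
          apply mul_le_mul_of_nonneg_right _ ht0
          rw [hlamsq]; exact hInf_le
      _ ≤ A := h1
  -- Step 1 : ∑ a² ≤ t * B
  have hstep1 : (∑ j ∈ Finset.univ \ (S ∪ S0), a j ^ 2) ≤ t * B := by
    rw [hB, Finset.mul_sum]
    apply Finset.sum_le_sum
    intro j hj
    simp only [Finset.mem_sdiff, Finset.mem_union, not_or] at hj
    obtain ⟨-, hjS, hjS0⟩ := hj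
    have h1 : a j / lam j ≤ t := hS0top j0 hj0S0 j hjS hjS0
    have hlj := hlam j
    have h2 : a j ≤ lam j * t := by
      rw [div_le_iff₀ hlj] at h1; linarith [h1]
    nlinarith [ha0 j, ht0]
  have hBnn : 0 ≤ B := Finset.sum_nonneg fun j _ => mul_nonneg (hlam j).le (ha0 j)
  have hAnn : 0 ≤ A := Finset.sum_nonneg fun j _ => mul_nonneg (hlam j).le (ha0 j)
  -- sum split : ∑_{univ\S} = A + B
  have hsplit : (∑ j ∈ Finset.univ \ S, lam j * a j) = A + B := by
    rw [hA, hB, ← Finset.sum_union]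
    · congr 1
      ext j
      simp only [Finset.mem_union, Finset.mem_sdiff, Finset.mem_univ, true_and, not_or]
      constructor
      · intro hj
        by_cases h : j ∈ S0
        · left; exact h
        · right; constructor
          · intro hS; exact hj hS
          · exact h
      · rintro (h | ⟨h1, h2⟩)
        · exact Finset.disjoint_left.mp hS0S h
        · exact h1
    · rw [Finset.disjoint_left]
      intro j hj hj2
      simp only [Finset.mem_sdiff, Finset.mem_union, not_or] at hj2
      exact hj2.2.2 hj
  -- final bound
  have hkey : (∑ j ∈ Finset.univ \ (S ∪ S0), a j ^ 2) ≤
      ((2 * lamMinus)⁻¹ * (A + B)) ^ 2 := by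
    have hl2 : (0:ℝ) < lamMinus ^ 2 := by positivity
    have h1 : lamMinus ^ 2 * (∑ j ∈ Finset.univ \ (S ∪ S0), a j ^ 2) ≤
        lamMinus ^ 2 * (t * B) := mul_le_mul_of_nonneg_left hstep1 hl2.le
    have h2 : lamMinus ^ 2 * (t * B) ≤ A * B := by
      have := mul_le_mul_of_nonneg_right hstep2 hBnn
      nlinarith
    have h3 : A * B ≤ ((A + B) / 2) ^ 2 := by nlinarith [sq_nonneg (A - B)]
    have hexp : ((2 * lamMinus)⁻¹ * (A + B)) ^ 2 = ((A + B) / 2) ^ 2 / lamMinus ^ 2 := by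
      field_simp
    rw [hexp, le_div_iff₀ hl2]
    nlinarith
  show Real.sqrt (∑ j ∈ Finset.univ \ (S ∪ S0), a j ^ 2) ≤
      (2 * lamMinus)⁻¹ * ∑ j ∈ Finset.univ \ S, lam j * a j
  calc Real.sqrt (∑ j ∈ Finset.univ \ (S ∪ S0), a j ^ 2)
      ≤ Real.sqrt (((2 * lamMinus)⁻¹ * (A + B)) ^ 2) := Real.sqrt_le_sqrt hkey
    _ = (2 * lamMinus)⁻¹ * (A + B) := by
        rw [Real.sqrt_sq]
        positivity
    _ = (2 * lamMinus)⁻¹ * ∑ j ∈ Finset.univ \ S, lam j * a j := by rw [hsplit]
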